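/- Let h be an m-uniform morphism (m ≥ 2) with fixed point w, let k ≥ 2, and let i be such that m^i ≥ k − 1. Then every factor of w of length m^i(n+1) can be written as p·h^i(u)·q where u is a factor of w of length n and |p| + |q| = m^i, and the k-Abelian class of p·h^i(u)·q is determined by p, q, and the 2-Abelian class of u. Consequently ρ^{(k)}_w(m^i(n+1)) ≤ C · ρ^{(2)}_w(n) for a constant C depending only on m, i, k and the alphabet. -/
import Mathlib

set_option linter.unusedSectionVars false
set_option maxHeartbeats 1000000

/-- Number of occurrences of `x` as a factor of `u`. -/
def occ {α : Type*} [DecidableEq α] (u x : List α) : ℕ :=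
  ((List.range (u.length + 1)).filter (fun i => decide (x <+: u.drop i))).length

/-- `k`-Abelian equivalence: same number of occurrences of every word of length at most `k`. -/
def KAbEq {α : Type*} [DecidableEq α] (k : ℕ) (u v : List α) : Prop :=
  ∀ x : List α, x.length ≤ k → occ u x = occ v x

/-- The factor of the infinite word `w` of length `n` starting at position `i`. -/
def factorAt {α : Type*} (w : ℕ → α) (i n : ℕ) : List α :=
  (List.range n).map (fun j => w (i + j))

/-- `k`-Abelian complexity: the number of `k`-Abelian classes of length-`n` factors of `w`. -/
noncomputable def rho {α : Type*} [DecidableEq α] (k : ℕ) (w : ℕ → α) (n : ℕ) : ℕ :=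
  Set.ncard { C : Set (List α) | ∃ i : ℕ,
    C = { v | (∃ j : ℕ, v = factorAt w j n) ∧ KAbEq k v (factorAt w i n) } }

/-- Iterate of the morphism `h` applied to a finite word. -/
def morphIter {α : Type*} (h : α → List α) : ℕ → List α → List α
  | 0, u => u
  | i + 1, u => (morphIter h i u).flatMap h

section OccBasics

variable {α : Type*} [DecidableEq α]

lemma occ_nil (x : List α) : occ [] x = if x = [] then 1 else 0 := by
  simp [occ, List.range_succ, List.prefix_nil]
  split <;> simp_all

lemma occ_cons (a : α) (u x : List α) :
    occ (a :: u) x = (if x <+: a :: u then 1 else 0) + occ u x := by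
  unfold occ
  rw [List.length_cons, List.range_succ_eq_map, List.filter_cons, List.filter_map]
  simp only [List.drop_zero]
  split <;> rename_i hdec
  · rw [if_pos (by simpa using hdec)]
    simp [List.comp_map, Function.comp_def, Nat.add_comm]
  · rw [if_neg (by simpa using hdec)]
    simp [Function.comp_def, Nat.add_comm]

lemma occ_zero_of_lt {u x : List α} (hl : u.length < x.length) : occ u x = 0 := by
  unfold occ
  rw [List.length_eq_zero_iff]
  rw [List.filter_eq_nil_iff]
  intro i _
  simp only [decide_eq_true_eq]
  intro hp
  have := hp.length_le
  simp at this
  omega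

lemma occ_nil_right (u : List α) : occ u [] = u.length + 1 := by
  unfold occ
  simp

lemma occ_count (u : List α) (a : α) : occ u [a] = u.count a := by
  induction u with
  | nil => simp [occ_nil]
  | cons b u ih =>
    rw [occ_cons, ih, List.count_cons]
    have : ([a] <+: b :: u) ↔ b = a := by
      constructor
      · intro hp
        have := hp.head ?_ <;> simp_all
      · rintro rfl; exact ⟨u, rfl⟩
    simp only [this]
    split <;> split <;> simp_all <;> omega

/-- suffix of length (at most) `d`. -/
def suf {α : Type*} (d : ℕ) (s : List α) : List α := s.drop (s.length - d)

lemma suf_length (d : ℕ) (s : List α) : (suf d s).length = min d s.length := by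
  simp [suf]; omega

lemma suf_cons {d : ℕ} {s : List α} (a : α) (hd : d ≤ s.length) :
    suf d (a :: s) = suf d s := by
  simp only [suf, List.length_cons]
  rw [show s.length + 1 - d = (s.length - d) + 1 by omega, List.drop_succ_cons]

lemma suf_all {d : ℕ} {s : List α} (hd : s.length ≤ d) : suf d s = s := by
  simp [suf, Nat.sub_eq_zero_of_le hd]

lemma suf_append_right {d : ℕ} (s t : List α) (hd : d ≤ t.length) :
    suf d (s ++ t) = suf d t := by
  simp only [suf, List.length_append]
  rw [List.drop_append, List.drop_eq_nil_of_le (by omega), List.nil_append]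
  congr 1; omega

lemma prefix_of_prefix_append {x l t : List α} (hp : x <+: l ++ t) (hl : x.length ≤ l.length) :
    x <+: l := by
  rw [List.prefix_iff_eq_take] at hp ⊢
  rw [List.take_append, Nat.sub_eq_zero_of_le hl, List.take_zero,
    List.append_nil] at hp
  exact hp

lemma prefix_append_take {x l t : List α} {c : ℕ} (hc : x.length ≤ l.length + c) :
    x <+: l ++ t ↔ x <+: l ++ t.take c := by
  rw [List.prefix_iff_eq_take, List.prefix_iff_eq_take,
    List.take_append, List.take_append, List.take_take,
    Nat.min_eq_left (by omega)]

lemma occ_append {s t x : List α} (hx : x ≠ []) :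
    occ (s ++ t) x = occ s x + occ (suf (x.length - 1) s ++ t.take (x.length - 1)) x + occ t x := by
  have hxl : 1 ≤ x.length := List.length_pos_iff.2 hx
  induction s with
  | nil =>
    have h0 : suf (x.length - 1) ([] : List α) = [] := by simp [suf]
    rw [List.nil_append, occ_nil, if_neg hx, h0, List.nil_append]
    have : occ (t.take (x.length - 1)) x = 0 := by
      apply occ_zero_of_lt
      have := List.length_take_le (x.length - 1) t
      omega
    simp [this]
  | cons a s ih =>
    rw [List.cons_append, occ_cons, ih, occ_cons]
    have key : (if x <+: a :: (s ++ t) then 1 else 0) +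
        occ (suf (x.length - 1) s ++ t.take (x.length - 1)) x
        = (if x <+: a :: s then 1 else 0) +
          occ (suf (x.length - 1) (a :: s) ++ t.take (x.length - 1)) x := by
      by_cases hls : x.length ≤ s.length + 1
      · rw [suf_cons a (by omega)]
        have : (x <+: a :: (s ++ t)) ↔ (x <+: a :: s) := by
          constructor
          · intro hp
            exact prefix_of_prefix_append (l := a :: s) hp (by simpa using hls)
          · intro hp
            exact hp.trans ((a :: s).prefix_append t)
        simp only [this]
      · push_neg at hls
        have h1 : ¬ (x <+: a :: s) := fun hp => by
          have := hp.length_le; simp at this; omega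
        rw [if_neg h1]
        rw [suf_all (show s.length ≤ x.length - 1 by omega),
          suf_all (show (a :: s).length ≤ x.length - 1 by simp; omega)]
        have e2 : (a :: s) ++ t.take (x.length - 1) = a :: (s ++ t.take (x.length - 1)) := rfl
        rw [e2, occ_cons]
        have hiff : (x <+: a :: (s ++ t)) ↔ (x <+: a :: (s ++ t.take (x.length - 1))) := by
          have := prefix_append_take (x := x) (l := a :: s) (t := t) (c := x.length - 1)
            (by simp; omega)
          simpa using this
        simp only [hiff]
        by_cases hc : x <+: a :: (s ++ t.take (x.length - 1)) <;> simp [hc]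
    omega

lemma single_prefix {a : α} {u : List α} : [a] <+: u ↔ u.head? = some a := by
  cases u with
  | nil => simp
  | cons b u => simp [List.cons_prefix_cons]; tauto

lemma pair_prefix {a b c : α} {u : List α} :
    [b, a] <+: c :: u ↔ b = c ∧ u.head? = some a := by
  rw [List.cons_prefix_cons, single_prefix]

section Fin
variable [Fintype α]

lemma head_formula (u : List α) (a : α) :
    occ u [a] = (∑ b : α, occ u [b, a]) + (if u.head? = some a then 1 else 0) := by
  induction u with
  | nil => simp [occ_nil]
  | cons c u ih =>
    rw [occ_cons, ih]
    have hsum : ∀ b : α, occ (c :: u) [b, a]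
        = (if b = c ∧ u.head? = some a then 1 else 0) + occ u [b, a] := by
      intro b
      rw [occ_cons]
      congr 1
      simp [pair_prefix, single_prefix]
    simp only [hsum, Finset.sum_add_distrib]
    have hthis : (∑ b : α, if b = c ∧ u.head? = some a then 1 else 0)
        = (if u.head? = some a then 1 else 0) := by
      by_cases hh : u.head? = some a
      · simp [hh]
      · simp [hh]
    rw [hthis]
    have hc : ([a] <+: c :: u) ↔ c = a := by
      rw [single_prefix]; simp
    simp only [hc, List.head?_cons]
    by_cases hca : c = a
    · subst hca; simp [Nat.add_comm]
    · have : ¬ (some c = some a) := by simpa using hca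
      simp [hca, this, Nat.add_comm]

lemma last_formula (u : List α) (a : α) :
    occ u [a] = (∑ b : α, occ u [a, b]) + (if u.getLast? = some a then 1 else 0) := by
  induction u with
  | nil => simp [occ_nil]
  | cons c u ih =>
    rw [occ_cons, ih]
    have hsum : ∀ b : α, occ (c :: u) [a, b]
        = (if a = c ∧ u.head? = some b then 1 else 0) + occ u [a, b] := by
      intro b
      rw [occ_cons]
      congr 1
      simp [pair_prefix, single_prefix]
    simp only [hsum, Finset.sum_add_distrib]
    have hsum2 : (∑ b : α, if a = c ∧ u.head? = some b then 1 else 0)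
        = (if a = c ∧ u ≠ [] then 1 else 0) := by
      by_cases hac : a = c
      · cases u with
        | nil => simp
        | cons e u => simp [hac]
      · simp [hac]
    rw [hsum2]
    have hc : ([a] <+: c :: u) ↔ a = c := by
      rw [single_prefix]; simp only [List.head?_cons, Option.some.injEq]; exact eq_comm
    simp only [hc]
    cases u with
    | nil =>
      simp only [List.getLast?_singleton, occ_nil]
      by_cases hac : a = c
      · subst hac; simp
      · have : ¬ (some c = some a) := by simpa using fun hh => hac hh.symm
        simp [hac, this]
    | cons e u =>
      rw [List.getLast?_cons_cons]
      by_cases hac : a = c <;> simp [hac] <;> omega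

lemma KAbEq.length_eq {k : ℕ} {u v : List α} (he : KAbEq k u v) : u.length = v.length := by
  have := he [] (by simp)
  rw [occ_nil_right, occ_nil_right] at this
  omega

lemma KAbEq.head?_eq {u v : List α} (he : KAbEq 2 u v) : u.head? = v.head? := by
  cases hu : u.head? with
  | none =>
    rw [List.head?_eq_none_iff] at hu
    subst hu
    have : v.length = 0 := by have := he.length_eq; simp at this; omega
    rw [List.length_eq_zero_iff] at this
    simp [this]
  | some a =>
    have h1 := head_formula u a
    have h2 := head_formula v a
    rw [he [a] (by simp)] at h1
    have hs : (∑ b : α, occ u [b, a]) = ∑ b : α, occ v [b, a] :=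
      Finset.sum_congr rfl fun b _ => he [b, a] (by simp)
    rw [hs] at h1
    rw [hu] at h1
    simp only [if_pos rfl] at h1
    by_cases hv : v.head? = some a
    · exact hv.symm
    · rw [if_neg hv] at h2; exfalso; simp at h1; omega

lemma KAbEq.getLast?_eq {u v : List α} (he : KAbEq 2 u v) : u.getLast? = v.getLast? := by
  cases hu : u.getLast? with
  | none =>
    rw [List.getLast?_eq_none_iff] at hu
    subst hu
    have : v.length = 0 := by have := he.length_eq; simp at this; omega
    rw [List.length_eq_zero_iff] at this
    simp [this]
  | some a =>
    have h1 := last_formula u a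
    have h2 := last_formula v a
    rw [he [a] (by simp)] at h1
    have hs : (∑ b : α, occ u [a, b]) = ∑ b : α, occ v [a, b] :=
      Finset.sum_congr rfl fun b _ => he [a, b] (by simp)
    rw [hs] at h1
    rw [hu] at h1
    simp only [if_pos rfl] at h1
    by_cases hv : v.getLast? = some a
    · exact hv.symm
    · rw [if_neg hv] at h2; exfalso; simp at h1; omega

end Fin

end OccBasics

section Morph

variable {α : Type*} [DecidableEq α]

lemma morphIter_append (h : α → List α) (i : ℕ) (u v : List α) :
    morphIter h i (u ++ v) = morphIter h i u ++ morphIter h i v := by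
  induction i with
  | zero => rfl
  | succ i ih => simp [morphIter, ih]

lemma morphIter_eq_flatMap (h : α → List α) (i : ℕ) (u : List α) :
    morphIter h i u = u.flatMap (fun a => morphIter h i [a]) := by
  induction u with
  | nil =>
    induction i with
    | zero => rfl
    | succ i ih => simp [morphIter, ih]
  | cons a u ih =>
    have e : (a :: u) = [a] ++ u := rfl
    rw [e, morphIter_append, ih]
    simp

lemma morphIter_flatMap_comm (h : α → List α) (i : ℕ) (u : List α) :
    morphIter h i (u.flatMap h) = (morphIter h i u).flatMap h := by
  induction i with
  | zero => rfl
  | succ i ih => simp [morphIter, ih]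

lemma flatMap_length_const {h : α → List α} {m : ℕ} (hunif : ∀ a, (h a).length = m)
    (u : List α) : (u.flatMap h).length = m * u.length := by
  induction u with
  | nil => simp
  | cons a u ih => simp [hunif, ih]; ring

lemma morphIter_length {h : α → List α} {m : ℕ} (hunif : ∀ a, (h a).length = m)
    (i : ℕ) (u : List α) : (morphIter h i u).length = m ^ i * u.length := by
  induction i with
  | zero => simp [morphIter]
  | succ i ih =>
    show ((morphIter h i u).flatMap h).length = _
    rw [flatMap_length_const hunif, ih, pow_succ]
    ring

variable [Fintype α]

lemma occ_flatMap (g : α → List α) (M : ℕ) (hg : ∀ a, (g a).length = M)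
    (x : List α) (hx : x ≠ []) (hd : x.length - 1 ≤ M) (u : List α) :
    occ (u.flatMap g) x =
      (∑ a : α, u.count a * occ (g a) x) +
      (∑ a : α, ∑ b : α,
        occ u [a, b] * occ (suf (x.length - 1) (g a) ++ (g b).take (x.length - 1)) x) := by
  have hxl : 1 ≤ x.length := List.length_pos_iff.2 hx
  induction u with
  | nil =>
    have h2 : ∀ a b : α, occ ([] : List α) [a, b] = 0 := fun a b =>
      occ_zero_of_lt (by simp)
    simp [occ_nil, hx, h2]
  | cons c u ih =>
    rw [show (c :: u).flatMap g = g c ++ u.flatMap g from rfl, occ_append hx]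
    have hcount : ∀ a : α, (c :: u).count a = u.count a + (if c = a then 1 else 0) := by
      intro a; rw [List.count_cons]; simp
    have hsum1 : (∑ a : α, (c :: u).count a * occ (g a) x)
        = (∑ a : α, u.count a * occ (g a) x) + occ (g c) x := by
      simp only [hcount, add_mul, ite_mul, one_mul, zero_mul, Finset.sum_add_distrib]
      rw [Finset.sum_ite_eq]
      simp
    cases u with
    | nil =>
      have hz1 : occ (([] : List α).flatMap g) x = 0 := by
        simp [occ_nil, hx]
      have hz2 : occ (suf (x.length - 1) (g c) ++ (([] : List α).flatMap g).take (x.length - 1)) x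
          = 0 := by
        apply occ_zero_of_lt
        have := suf_length (x.length - 1) (g c)
        simp only [List.flatMap_nil, List.take_nil, List.append_nil]
        omega
      rw [hz1, hz2, hsum1]
      have hz3 : ∀ a b : α, occ [c] [a, b] = 0 := fun a b => occ_zero_of_lt (by simp)
      have hz4 : ∀ a b : α, occ ([] : List α) [a, b] = 0 := fun a b =>
        occ_zero_of_lt (by simp)
      simp [hz3, hz4, occ_nil, hx]
    | cons e u' =>
      have htake : ((e :: u').flatMap g).take (x.length - 1) = (g e).take (x.length - 1) := by
        have hge : x.length - 1 - (g e).length = 0 := by rw [hg]; omega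
        rw [show (e :: u').flatMap g = g e ++ u'.flatMap g from rfl,
          List.take_append, hge, List.take_zero, List.append_nil]
      rw [htake, ih, hsum1]
      have hpair : ∀ a b : α, occ (c :: e :: u') [a, b]
          = (if a = c ∧ b = e then 1 else 0) + occ (e :: u') [a, b] := by
        intro a b
        rw [occ_cons]
        congr 1
        simp [pair_prefix, eq_comm]
      have hsum2 : (∑ a : α, ∑ b : α, occ (c :: e :: u') [a, b] *
            occ (suf (x.length - 1) (g a) ++ (g b).take (x.length - 1)) x)
          = (∑ a : α, ∑ b : α, occ (e :: u') [a, b] *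
              occ (suf (x.length - 1) (g a) ++ (g b).take (x.length - 1)) x)
            + occ (suf (x.length - 1) (g c) ++ (g e).take (x.length - 1)) x := by
        simp only [hpair, add_mul, ite_mul, one_mul, zero_mul, Finset.sum_add_distrib]
        have hinner : ∀ a : α, (∑ b : α, if a = c ∧ b = e then
              occ (suf (x.length - 1) (g a) ++ (g b).take (x.length - 1)) x else 0)
            = (if a = c then
                occ (suf (x.length - 1) (g a) ++ (g e).take (x.length - 1)) x else 0) := by
          intro a
          by_cases hac : a = c
          · simp only [hac, true_and, if_pos rfl]
            rw [Finset.sum_ite_eq' Finset.univ e]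
            simp
          · simp [hac]
        rw [Finset.sum_congr rfl (fun a _ => by rw [hinner a])]
        rw [Finset.sum_ite_eq' Finset.univ c]
        simp
        try ring
      rw [hsum2]
      ring

lemma take_flatMap_head (g : α → List α) {M d : ℕ} (hg : ∀ a, (g a).length = M)
    (hd : d ≤ M) {u : List α} {c : α} (hu : u.head? = some c) :
    (u.flatMap g).take d = (g c).take d := by
  cases u with
  | nil => simp at hu
  | cons a u =>
    simp only [List.head?_cons, Option.some.injEq] at hu
    rw [show (a :: u).flatMap g = g a ++ u.flatMap g from rfl,
      List.take_append,
      show d - (g a).length = 0 by rw [hg]; omega, List.take_zero, List.append_nil, hu]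

lemma suf_flatMap_last (g : α → List α) {M d : ℕ} (hg : ∀ a, (g a).length = M)
    (hd : d ≤ M) : ∀ (u : List α) (c : α), u.getLast? = some c →
    suf d (u.flatMap g) = suf d (g c) := by
  intro u
  induction u with
  | nil => intro c hu; simp at hu
  | cons a u ih =>
    intro c hu
    cases u with
    | nil =>
      simp only [List.getLast?_singleton, Option.some.injEq] at hu
      subst hu
      simp
    | cons b u' =>
      rw [List.getLast?_cons_cons] at hu
      rw [show (a :: b :: u').flatMap g = g a ++ (b :: u').flatMap g from rfl,
        suf_append_right _ _ ?_, ih c hu]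
      rw [flatMap_length_const hg]
      simp only [List.length_cons]
      calc d ≤ M := hd
        _ ≤ M * (u'.length + 1) := Nat.le_mul_of_pos_right M (by omega)

lemma part2core (g : α → List α) (M : ℕ) (hg : ∀ a, (g a).length = M)
    (k : ℕ) (hk : 2 ≤ k) (hkM : k - 1 ≤ M)
    (p q u v : List α) (he : KAbEq 2 u v) :
    KAbEq k (p ++ u.flatMap g ++ q) (p ++ v.flatMap g ++ q) := by
  intro x hxk
  by_cases hx : x = []
  · subst hx
    rw [occ_nil_right, occ_nil_right]
    simp [flatMap_length_const hg, he.length_eq]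
  · have hxl : 1 ≤ x.length := List.length_pos_iff.2 hx
    have hdx : x.length - 1 ≤ M := by omega
    set d := x.length - 1 with hdd
    cases hu : u.head? with
    | none =>
      rw [List.head?_eq_none_iff] at hu
      subst hu
      have hv : v.length = 0 := by
        have := he.length_eq; simp at this; omega
      rw [List.length_eq_zero_iff] at hv
      subst hv
      rfl
    | some c =>
      have hune : u ≠ [] := by intro hh; subst hh; simp at hu
      have hvh : v.head? = some c := by rw [← he.head?_eq]; exact hu
      have hvne : v ≠ [] := by intro hh; subst hh; simp at hvh
      obtain ⟨c', hcl⟩ : ∃ c', u.getLast? = some c' := by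
        cases hcl : u.getLast? with
        | none => rw [List.getLast?_eq_none_iff] at hcl; exact absurd hcl hune
        | some c' => exact ⟨c', rfl⟩
      have hvl : v.getLast? = some c' := by rw [← he.getLast?_eq]; exact hcl
      have hlenu : (u.flatMap g).length = M * u.length := flatMap_length_const hg u
      have hlenv : (v.flatMap g).length = M * v.length := flatMap_length_const hg v
      have hu1 : 1 ≤ u.length := List.length_pos_iff.2 hune
      have hv1 : 1 ≤ v.length := List.length_pos_iff.2 hvne
      have h1 : (u.flatMap g ++ q).take d = (v.flatMap g ++ q).take d := by
        rw [List.take_append, List.take_append,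
          show d - (u.flatMap g).length = 0 by
            rw [hlenu]; have := Nat.le_mul_of_pos_right M hu1; omega,
          show d - (v.flatMap g).length = 0 by
            rw [hlenv]; have := Nat.le_mul_of_pos_right M hv1; omega,
          List.take_zero, List.append_nil, List.append_nil,
          take_flatMap_head g hg hdx hu, take_flatMap_head g hg hdx hvh]
      have h2 : suf d (u.flatMap g) = suf d (v.flatMap g) := by
        rw [suf_flatMap_last g hg hdx u c' hcl, suf_flatMap_last g hg hdx v c' hvl]
      have h3 : occ (u.flatMap g) x = occ (v.flatMap g) x := by
        rw [occ_flatMap g M hg x hx hdx u, occ_flatMap g M hg x hx hdx v]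
        congr 1
        · refine Finset.sum_congr rfl fun a _ => ?_
          rw [show u.count a = occ u [a] from (occ_count u a).symm,
            show v.count a = occ v [a] from (occ_count v a).symm, he [a] (by simp)]
        · refine Finset.sum_congr rfl fun a _ => Finset.sum_congr rfl fun b _ => ?_
          rw [he [a, b] (by simp)]
      calc occ (p ++ u.flatMap g ++ q) x
          = occ p x + occ (suf d p ++ (u.flatMap g ++ q).take d) x
            + occ (u.flatMap g ++ q) x := by
            rw [List.append_assoc]; exact occ_append hx
        _ = occ p x + occ (suf d p ++ (v.flatMap g ++ q).take d) x
            + occ (v.flatMap g ++ q) x := by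
            rw [h1]
            congr 1
            rw [occ_append (s := u.flatMap g) (t := q) hx,
              occ_append (s := v.flatMap g) (t := q) hx, h2, h3]
        _ = occ (p ++ v.flatMap g ++ q) x := by
            rw [List.append_assoc]; exact (occ_append hx).symm

lemma part2 {m : ℕ} {h : α → List α} (hunif : ∀ a, (h a).length = m)
    {k i : ℕ} (hk : 2 ≤ k) (hi : k - 1 ≤ m ^ i)
    (p q u v : List α) (he : KAbEq 2 u v) :
    KAbEq k (p ++ morphIter h i u ++ q) (p ++ morphIter h i v ++ q) := by
  rw [morphIter_eq_flatMap h i u, morphIter_eq_flatMap h i v]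
  exact part2core (fun a => morphIter h i [a]) (m ^ i)
    (fun a => by rw [morphIter_length hunif]; simp) k hk hi p q u v he

end Morph

section Part1

variable {α : Type*} [DecidableEq α] {w : ℕ → α} {m : ℕ} {h : α → List α}

lemma factorAt_length (i n : ℕ) : (factorAt w i n).length = n := by simp [factorAt]

lemma factorAt_append (i n₁ n₂ : ℕ) :
    factorAt w i (n₁ + n₂) = factorAt w i n₁ ++ factorAt w (i + n₁) n₂ := by
  unfold factorAt
  rw [List.range_add, List.map_append, List.map_map]
  congr 1
  refine List.map_congr_left fun j hj => ?_
  simp only [Function.comp_def]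
  congr 1
  omega

lemma factorAt_one (i : ℕ) : factorAt w i 1 = [w i] := by
  simp [factorAt, List.range_succ]

lemma block_lemma (hm : 1 ≤ m) (hunif : ∀ a, (h a).length = m)
    (hfix : ∀ j : ℕ, w j = (h (w (j / m))).getD (j % m) (w 0)) (j : ℕ) :
    factorAt w (m * j) m = h (w j) := by
  apply List.ext_getElem (by simp [factorAt, hunif])
  intro r h1 h2
  have hr : r < m := by simpa [factorAt] using h1
  simp only [factorAt, List.getElem_map, List.getElem_range]
  rw [hfix (m * j + r)]
  have hdiv : (m * j + r) / m = j := by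
    rw [Nat.mul_add_div (by omega), Nat.div_eq_of_lt hr]; omega
  have hmod : (m * j + r) % m = r := by
    rw [Nat.mul_add_mod, Nat.mod_eq_of_lt hr]
  rw [hdiv, hmod, List.getD_eq_getElem _ _ (by rw [hunif]; exact hr)]

lemma block_lemma_n (hm : 1 ≤ m) (hunif : ∀ a, (h a).length = m)
    (hfix : ∀ j : ℕ, w j = (h (w (j / m))).getD (j % m) (w 0)) (j n : ℕ) :
    factorAt w (m * j) (m * n) = (factorAt w j n).flatMap h := by
  induction n with
  | zero => simp [factorAt]
  | succ n ih =>
    have e1 : m * (n + 1) = m * n + m := by ring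
    have e2 : n + 1 = n + 1 := rfl
    rw [e1, factorAt_append (m * j) (m * n) m,
      show m * j + m * n = m * (j + n) by ring,
      block_lemma hm hunif hfix (j + n), ih,
      show (n + 1) = n + 1 from rfl, factorAt_append j n 1, factorAt_one,
      List.flatMap_append]
    simp

lemma block_lemma_iter (hm : 1 ≤ m) (hunif : ∀ a, (h a).length = m)
    (hfix : ∀ j : ℕ, w j = (h (w (j / m))).getD (j % m) (w 0)) (i j n : ℕ) :
    factorAt w (m ^ i * j) (m ^ i * n) = morphIter h i (factorAt w j n) := by
  induction i generalizing j n with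
  | zero => simp [morphIter]
  | succ i ih =>
    calc factorAt w (m ^ (i + 1) * j) (m ^ (i + 1) * n)
        = factorAt w (m ^ i * (m * j)) (m ^ i * (m * n)) := by ring_nf
      _ = morphIter h i (factorAt w (m * j) (m * n)) := ih (m * j) (m * n)
      _ = morphIter h i ((factorAt w j n).flatMap h) := by
          rw [block_lemma_n hm hunif hfix]
      _ = (morphIter h i (factorAt w j n)).flatMap h :=
          morphIter_flatMap_comm h i _

lemma part1 (hm : 1 ≤ m) (hunif : ∀ a, (h a).length = m)
    (hfix : ∀ j : ℕ, w j = (h (w (j / m))).getD (j % m) (w 0)) (i n l : ℕ) :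
    ∃ (p q u : List α) (j : ℕ),
      factorAt w l (m ^ i * (n + 1)) = p ++ morphIter h i u ++ q ∧
      u = factorAt w j n ∧ p.length + q.length = m ^ i := by
  set M := m ^ i with hM
  have hM1 : 1 ≤ M := Nat.one_le_pow _ _ (by omega)
  set r := l % M with hr
  have hrM : r < M := Nat.mod_lt _ (by omega)
  set j := l / M + 1 with hj
  refine ⟨factorAt w l (M - r), factorAt w (M * j + M * n) r, factorAt w j n, j, ?_, rfl, ?_⟩
  · have e1 : M * (n + 1) = (M - r) + (M * n + r) := by
      have := Nat.mul_le_mul_left M (show 1 ≤ n + 1 by omega)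
      ring_nf
      omega
    rw [e1, factorAt_append l (M - r) (M * n + r),
      show l + (M - r) = M * j by
        have h1 := Nat.div_add_mod l M
        have h2 : M * (l / M + 1) = M * (l / M) + M := by ring
        rw [hj]
        omega,
      factorAt_append (M * j) (M * n) r,
      block_lemma_iter hm hunif hfix i j n, List.append_assoc]
  · rw [factorAt_length, factorAt_length]; omega

end Part1

lemma ncard_prod' {β γ : Type*} (s : Set β) (t : Set γ) :
    (s ×ˢ t).ncard = s.ncard * t.ncard := by
  rw [← Nat.card_coe_set_eq, ← Nat.card_coe_set_eq, ← Nat.card_coe_set_eq,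
    ← Nat.card_prod]
  exact Nat.card_congr (Equiv.Set.prod s t)

lemma KAbEq.refl' {α : Type*} [DecidableEq α] (k : ℕ) (u : List α) : KAbEq k u u :=
  fun _ _ => rfl

lemma KAbEq.symm' {α : Type*} [DecidableEq α] {k : ℕ} {u v : List α}
    (he : KAbEq k u v) : KAbEq k v u := fun x hx => (he x hx).symm

lemma KAbEq.trans' {α : Type*} [DecidableEq α] {k : ℕ} {u v t : List α}
    (h1 : KAbEq k u v) (h2 : KAbEq k v t) : KAbEq k u t :=
  fun x hx => (h1 x hx).trans (h2 x hx)

section Part3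

variable {α : Type*} [Fintype α] [DecidableEq α]

/-- the `k`-abelian class (among length-`n` factors of `w`) of the factor at `i₀`. -/
def cls (w : ℕ → α) (k n i₀ : ℕ) : Set (List α) :=
  { v | (∃ j : ℕ, v = factorAt w j n) ∧ KAbEq k v (factorAt w i₀ n) }

lemma rho_eq (k : ℕ) (w : ℕ → α) (n : ℕ) :
    rho k w n = Set.ncard { C : Set (List α) | ∃ i₀ : ℕ, C = cls w k n i₀ } := rfl

lemma cls_eq_of_kabeq {w : ℕ → α} {k n i₀ i₁ : ℕ}
    (he : KAbEq k (factorAt w i₀ n) (factorAt w i₁ n)) :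
    cls w k n i₀ = cls w k n i₁ := by
  ext v
  exact ⟨fun ⟨hj, hv⟩ => ⟨hj, hv.trans' he⟩, fun ⟨hj, hv⟩ => ⟨hj, hv.trans' he.symm'⟩⟩

lemma clsSet_finite (k : ℕ) (w : ℕ → α) (n : ℕ) :
    { C : Set (List α) | ∃ i₀ : ℕ, C = cls w k n i₀ }.Finite := by
  apply Set.Finite.subset
    (Set.Finite.finite_subsets (Set.Finite.subset (List.finite_length_le α n)
      (fun v (hv : v.length = n) => le_of_eq hv)))
  rintro C ⟨i₀, rfl⟩
  rintro v ⟨⟨j, rfl⟩, -⟩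
  exact factorAt_length j n

lemma part3 {m : ℕ} (hm : 2 ≤ m) {h : α → List α} (hunif : ∀ a, (h a).length = m)
    {w : ℕ → α} (hfix : ∀ j : ℕ, w j = (h (w (j / m))).getD (j % m) (w 0))
    {k : ℕ} (hk : 2 ≤ k) {i : ℕ} (hi : k - 1 ≤ m ^ i) :
    ∃ C : ℕ, ∀ n : ℕ, rho k w (m ^ i * (n + 1)) ≤ C * rho 2 w n := by
  classical
  set M := m ^ i with hMdef
  set P : Set (List α × List α) := {pq | pq.1.length + pq.2.length = M} with hPdef
  have hPfin : P.Finite := by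
    apply Set.Finite.subset (Set.Finite.prod (List.finite_length_le α M)
      (List.finite_length_le α M))
    rintro ⟨p, q⟩ hpq
    have : p.length + q.length = M := hpq
    exact ⟨by simp; omega, by simp; omega⟩
  refine ⟨P.ncard, fun n => ?_⟩
  set N := M * (n + 1) with hNdef
  set S2 : Set (Set (List α)) := { C : Set (List α) | ∃ i₀ : ℕ, C = cls w 2 n i₀ } with hS2def
  set SK : Set (Set (List α)) := { C : Set (List α) | ∃ i₀ : ℕ, C = cls w k N i₀ } with hSKdef
  have hS2fin : S2.Finite := clsSet_finite 2 w n
  -- the decomposition data for each starting position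
  have hdec : ∀ i₀ : ℕ, ∃ (p q u : List α) (j : ℕ),
      factorAt w i₀ N = p ++ morphIter h i u ++ q ∧
      u = factorAt w j n ∧ p.length + q.length = M :=
    fun i₀ => part1 (by omega) hunif hfix i n i₀
  choose pp qq uu jj hdec1 hdec2 hdec3 using hdec
  -- the injection
  set f : Set (List α) → (List α × List α) × Set (List α) :=
    fun C => if hC : C ∈ SK then
        ((pp hC.choose, qq hC.choose), cls w 2 n (jj hC.choose))
      else (([], []), ∅) with hfdef
  have hmaps : ∀ C ∈ SK, f C ∈ P ×ˢ S2 := by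
    intro C hC
    rw [hfdef]
    simp only [dif_pos hC]
    exact ⟨hdec3 hC.choose, ⟨jj hC.choose, rfl⟩⟩
  have hinj : Set.InjOn f SK := by
    intro C hC C' hC' hf
    rw [hfdef] at hf
    simp only [dif_pos hC, dif_pos hC', Prod.mk.injEq] at hf
    obtain ⟨⟨hp, hq⟩, hcls⟩ := hf
    set i₀ := hC.choose with hi₀
    set i₁ := hC'.choose with hi₁
    have hC0 : C = cls w k N i₀ := hC.choose_spec
    have hC1 : C' = cls w k N i₁ := hC'.choose_spec
    -- the 2-classes of the middle words agree
    have hu1 : uu i₁ ∈ cls w 2 n (jj i₁) := by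
      rw [hdec2 i₁]
      exact ⟨⟨jj i₁, rfl⟩, KAbEq.refl' _ _⟩
    rw [← hcls] at hu1
    obtain ⟨-, hu1⟩ := hu1
    rw [← hdec2 i₀] at hu1
    -- hence the k-classes of the full factors agree
    have hk1 : KAbEq k (factorAt w i₁ N) (factorAt w i₀ N) := by
      rw [hdec1 i₀, hdec1 i₁, hp, hq]
      exact part2 hunif hk hi _ _ _ _ hu1
    rw [hC0, hC1, cls_eq_of_kabeq hk1]
  calc rho k w N = SK.ncard := rho_eq k w N
    _ ≤ (P ×ˢ S2).ncard :=
        Set.ncard_le_ncard_of_injOn f hmaps hinj (hPfin.prod hS2fin)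
    _ = P.ncard * S2.ncard := ncard_prod' P S2
    _ = P.ncard * rho 2 w n := rfl

end Part3

theorem stmt15 {α : Type*} [Fintype α] [DecidableEq α]
    (m : ℕ) (hm : 2 ≤ m) (h : α → List α) (hunif : ∀ a, (h a).length = m)
    (w : ℕ → α)
    (hfix : ∀ j : ℕ, w j = (h (w (j / m))).getD (j % m) (w 0))
    (k : ℕ) (hk : 2 ≤ k) (i : ℕ) (hi : k - 1 ≤ m ^ i) :
    (∀ n l : ℕ, ∃ (p q u : List α) (j : ℕ),
      factorAt w l (m ^ i * (n + 1)) = p ++ morphIter h i u ++ q ∧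
      u = factorAt w j n ∧ p.length + q.length = m ^ i) ∧
    (∀ p q u v : List α, KAbEq 2 u v →
      KAbEq k (p ++ morphIter h i u ++ q) (p ++ morphIter h i v ++ q)) ∧
    (∃ C : ℕ, ∀ n : ℕ, rho k w (m ^ i * (n + 1)) ≤ C * rho 2 w n) :=
  ⟨fun n l => part1 (by omega) hunif hfix i n l,
   fun p q u v he => part2 hunif hk hi p q u v he,
   part3 hm hunif hfix hk hi⟩
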